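/- There exists an absolute constant c₀ > 0 such that the following holds. For every integer n ≥ 1 and all reals ε, γ with 0 < ε < γ < 1/3, if X is a binomial random variable with parameters n and 1/2, then P(X ≥ (1/2+γ)n | X ≥ (1/2+ε)n) ≥ (c₀/n)·e^{−6(γ²−ε²)n}. -/

import Mathlib

lemma exp_quad_aux {x : ℝ} (hx0 : 0 ≤ x) (hx1 : x ≤ 11/15) :
    Real.exp (-(6*x)) * (1+x) ≤ 1 - x := by
  have h1 : 1 + 3*x ≤ Real.exp (3*x) := by
    have := Real.add_one_le_exp (3*x); linarith
  have h2 : (1+3*x)^2 ≤ Real.exp (6*x) := by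
    have he : Real.exp (6*x) = Real.exp (3*x) ^ 2 := by
      rw [sq, ← Real.exp_add]; ring_nf
    nlinarith [Real.exp_pos (3*x)]
  have h3 : Real.exp (-(6*x)) * Real.exp (6*x) = 1 := by
    rw [← Real.exp_add]; simp
  have hE := Real.exp_pos (-(6*x))
  have h4 : Real.exp (-(6*x)) * (1+3*x)^2 ≤ 1 := by nlinarith
  have hp : 0 ≤ (4 + 3*x - 9*x^2) * x := by nlinarith
  nlinarith [mul_le_mul_of_nonneg_left h4 (by linarith : (0:ℝ) ≤ 1 - x),
    mul_nonneg hE.le hp]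

lemma choose_anti_aux (n a : ℕ) (h : n < 2*a) : ∀ i, a ≤ i → n.choose i ≤ n.choose a := by
  intro i hi
  induction i, hi using Nat.le_induction with
  | base => exact le_refl _
  | succ i hi ih =>
    have h2 : n - i ≤ i + 1 := by omega
    have h3 : n.choose (i+1) * (i+1) ≤ n.choose i * (i+1) := by
      calc n.choose (i+1) * (i+1) = n.choose i * (n-i) := Nat.choose_succ_right_eq n i
        _ ≤ n.choose i * (i+1) := Nat.mul_le_mul_left _ h2
    exact le_trans (Nat.le_of_mul_le_mul_right h3 (Nat.succ_pos i)) ih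

lemma chain_aux (n : ℕ) (g : ℕ → ℝ) (a : ℕ) :
    ∀ b, a ≤ b → (∀ i, a ≤ i → i < b → Real.exp (g i) * n.choose i ≤ n.choose (i+1)) →
    Real.exp (∑ i ∈ Finset.Ico a b, g i) * n.choose a ≤ n.choose b := by
  intro b hab
  induction b, hab using Nat.le_induction with
  | base => intro _; simp
  | succ b hab ih =>
    intro h
    have h1 := ih (fun i hi hib => h i hi (by omega))
    have h2 := h b hab (by omega)
    rw [Finset.sum_Ico_succ_top hab, Real.exp_add]
    calc Real.exp (∑ i ∈ Finset.Ico a b, g i) * Real.exp (g b) * n.choose a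
        = Real.exp (g b) * (Real.exp (∑ i ∈ Finset.Ico a b, g i) * n.choose a) := by ring
      _ ≤ Real.exp (g b) * n.choose b :=
          mul_le_mul_of_nonneg_left h1 (Real.exp_pos _).le
      _ ≤ n.choose (b+1) := h2

lemma sum_formula_aux (n a : ℕ) : ∀ b, a ≤ b →
    (∑ i ∈ Finset.Ico a b, (2*(i:ℝ)+2-n)) = ((b:ℝ)-a)*((a:ℝ)+b+1-n) := by
  intro b hab
  induction b, hab using Nat.le_induction with
  | base => simp
  | succ b hab ih =>
    rw [Finset.sum_Ico_succ_top hab, ih]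
    push_cast; ring

set_option maxHeartbeats 2000000 in
theorem stmt4 : ∃ c₀ : ℝ, 0 < c₀ ∧ ∀ n : ℕ, 1 ≤ n → ∀ ε γ : ℝ,
    0 < ε → ε < γ → γ < 1/3 →
    (∑ i ∈ Finset.Icc ⌈(1/2 + γ) * (n : ℝ)⌉₊ n, (n.choose i : ℝ)) /
        (∑ i ∈ Finset.Icc ⌈(1/2 + ε) * (n : ℝ)⌉₊ n, (n.choose i : ℝ))
      ≥ (c₀ / n) * Real.exp (-(6 * (γ^2 - ε^2) * n)) := by
  refine ⟨Real.exp (-25), Real.exp_pos _, ?_⟩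
  intro n hn ε γ hε hεγ hγ
  set a := ⌈(1/2 + ε) * (n : ℝ)⌉₊ with ha_def
  set b := ⌈(1/2 + γ) * (n : ℝ)⌉₊ with hb_def
  have hn0 : (0:ℝ) < n := by exact_mod_cast hn
  have hn1 : (1:ℝ) ≤ n := by exact_mod_cast hn
  have hA : (1/2 + ε) * (n:ℝ) ≤ a := Nat.le_ceil _
  have hA' : (a:ℝ) < (1/2 + ε) * n + 1 := Nat.ceil_lt_add_one (by nlinarith)
  have hB : (1/2 + γ) * (n:ℝ) ≤ b := Nat.le_ceil _
  have hB' : (b:ℝ) < (1/2 + γ) * n + 1 := Nat.ceil_lt_add_one (by nlinarith)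
  have hab : a ≤ b := Nat.ceil_le_ceil (by nlinarith)
  have hbn : b ≤ n := Nat.ceil_le.mpr (by nlinarith)
  have han : a ≤ n := le_trans hab hbn
  have h2a : n < 2 * a := by
    have : (n:ℝ) < 2 * a := by nlinarith
    exact_mod_cast this
  have hD1 : (1:ℝ) ≤ ∑ i ∈ Finset.Icc a n, (n.choose i : ℝ) := by
    have hmem : n ∈ Finset.Icc a n := Finset.mem_Icc.mpr ⟨han, le_refl n⟩
    have := Finset.single_le_sum (f := fun i => (n.choose i : ℝ))
      (fun i _ => by positivity) hmem
    simpa using this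
  have hD0 : (0:ℝ) < ∑ i ∈ Finset.Icc a n, (n.choose i : ℝ) := lt_of_lt_of_le one_pos hD1
  have hΔ : 0 ≤ γ^2 - ε^2 := by nlinarith
  have hexp1 : Real.exp (-(6 * (γ^2 - ε^2) * n)) ≤ 1 := by
    rw [show (1:ℝ) = Real.exp 0 from (Real.exp_zero).symm]
    exact Real.exp_le_exp.mpr (by nlinarith)
  by_cases hsmall : n < 30
  · -- small n : trivial bound
    have hN1 : (1:ℝ) ≤ ∑ i ∈ Finset.Icc b n, (n.choose i : ℝ) := by
      have hmem : n ∈ Finset.Icc b n := Finset.mem_Icc.mpr ⟨hbn, le_refl n⟩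
      have := Finset.single_le_sum (f := fun i => (n.choose i : ℝ))
        (fun i _ => by positivity) hmem
      simpa using this
    have hD2 : (∑ i ∈ Finset.Icc a n, (n.choose i : ℝ)) ≤ 2^n := by
      have hsub : Finset.Icc a n ⊆ Finset.range (n+1) := by
        intro i hi
        simp only [Finset.mem_Icc] at hi
        simp only [Finset.mem_range]; omega
      calc (∑ i ∈ Finset.Icc a n, (n.choose i : ℝ))
          ≤ ∑ i ∈ Finset.range (n+1), (n.choose i : ℝ) :=
            Finset.sum_le_sum_of_subset_of_nonneg hsub (fun i _ _ => by positivity)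
        _ = 2^n := by exact_mod_cast Nat.sum_range_choose n
    have hlow : (1:ℝ)/2^n ≤ (∑ i ∈ Finset.Icc b n, (n.choose i : ℝ)) /
        (∑ i ∈ Finset.Icc a n, (n.choose i : ℝ)) :=
      div_le_div₀ (by positivity) hN1 hD0 hD2
    have h230 : (2:ℝ)^30 ≤ Real.exp 25 := by
      have h := Real.exp_one_gt_d9
      calc (2:ℝ)^30 ≤ 2.7^25 := by norm_num
        _ ≤ (Real.exp 1)^25 := pow_le_pow_left₀ (by norm_num) (by norm_num at h ⊢; linarith) 25
        _ = Real.exp 25 := by rw [← Real.exp_nat_mul]; norm_num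
    have hc1 : Real.exp (-25) ≤ 1/2^30 := by
      rw [Real.exp_neg, inv_eq_one_div]
      exact one_div_le_one_div_of_le (by positivity) h230
    have hrhs : (Real.exp (-25) / n) * Real.exp (-(6*(γ^2-ε^2)*n)) ≤ 1/2^n := by
      have h1 : Real.exp (-25)/n ≤ Real.exp (-25) := div_le_self (Real.exp_pos _).le hn1
      have h2 : (1:ℝ)/2^30 ≤ 1/2^n := by
        apply one_div_le_one_div_of_le (by positivity)
        exact pow_le_pow_right₀ (by norm_num) (by omega)
      calc (Real.exp (-25) / n) * Real.exp (-(6*(γ^2-ε^2)*n))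
          ≤ Real.exp (-25) * 1 :=
            mul_le_mul h1 hexp1 (Real.exp_pos _).le (Real.exp_pos _).le
        _ = Real.exp (-25) := mul_one _
        _ ≤ 1/2^30 := hc1
        _ ≤ 1/2^n := h2
    exact le_trans hrhs hlow
  · push_neg at hsmall
    have h30 : (30:ℝ) ≤ n := by exact_mod_cast hsmall
    have hCa : (0:ℝ) < n.choose a := by exact_mod_cast Nat.choose_pos han
    -- per-step bound
    have hstep : ∀ i, a ≤ i → i < b →
        Real.exp (-(6/(n:ℝ)) * (2*(i:ℝ)+2-n)) * n.choose i ≤ n.choose (i+1) := by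
      intro i hi hib
      have hin : i < n := lt_of_lt_of_le hib hbn
      have hin' : (i:ℝ) < n := by exact_mod_cast hin
      have h2i : n < 2*i + 2 := by omega
      have h2i' : (n:ℝ) < 2*i + 2 := by exact_mod_cast h2i
      have hib' : (i:ℝ) + 1 ≤ b := by exact_mod_cast hib
      set x : ℝ := (2*(i:ℝ)+2-n)/n with hx
      have hx0 : 0 ≤ x := by
        apply div_nonneg _ hn0.le
        linarith
      have hx1 : x ≤ 11/15 := by
        rw [hx, div_le_iff₀ hn0]
        nlinarith
      have hq := exp_quad_aux hx0 hx1
      have hxe : -(6/(n:ℝ)) * (2*(i:ℝ)+2-n) = -(6*x) := by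
        rw [hx]; field_simp
      rw [hxe]
      have hc' : (n.choose (i+1) : ℝ) * ((i:ℝ)+1) = (n.choose i : ℝ) * ((n:ℝ) - i) := by
        have hc := Nat.choose_succ_right_eq n i
        have := congrArg (Nat.cast : ℕ → ℝ) hc
        push_cast [Nat.cast_sub hin.le] at this
        linarith [this]
      have key : Real.exp (-(6*x)) * ((i:ℝ)+1) ≤ (n:ℝ) - i := by
        have e1 : (n:ℝ)*(1+x) = 2*i+2 := by rw [hx]; field_simp; ring
        have e2 : (n:ℝ)*(1-x) = 2*((n:ℝ)-i) - 2 := by rw [hx]; field_simp; ring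
        nlinarith [Real.exp_pos (-(6*x)), mul_le_mul_of_nonneg_left hq hn0.le]
      have hcp : (0:ℝ) < (i:ℝ)+1 := by positivity
      have hfin : Real.exp (-(6*x)) * (n.choose i : ℝ) * ((i:ℝ)+1)
          ≤ (n.choose (i+1) : ℝ) * ((i:ℝ)+1) := by
        rw [hc']
        calc Real.exp (-(6*x)) * (n.choose i : ℝ) * ((i:ℝ)+1)
            = (n.choose i : ℝ) * (Real.exp (-(6*x)) * ((i:ℝ)+1)) := by ring
          _ ≤ (n.choose i : ℝ) * ((n:ℝ) - i) :=
              mul_le_mul_of_nonneg_left key (by positivity)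
      exact le_of_mul_le_mul_right hfin hcp
    have hchain := chain_aux n (fun i => -(6/(n:ℝ)) * (2*(i:ℝ)+2-n)) a b hab hstep
    have hsum : (∑ i ∈ Finset.Ico a b, (-(6/(n:ℝ)) * (2*(i:ℝ)+2-n)))
        = -(6/(n:ℝ)) * (((b:ℝ)-a)*((a:ℝ)+b+1-n)) := by
      rw [← Finset.mul_sum, sum_formula_aux n a b hab]
    have hSb : (6/(n:ℝ)) * (((b:ℝ)-a)*((a:ℝ)+b+1-n)) ≤ 6*(γ^2-ε^2)*n + 11 := by
      have hab' : (a:ℝ) ≤ b := by exact_mod_cast hab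
      have h2a' : (n:ℝ) < 2*a := by exact_mod_cast h2a
      have hba1 : (b:ℝ) - a ≤ (γ-ε)*n + 1 := by nlinarith
      have hba0 : (0:ℝ) ≤ (b:ℝ) - a := by linarith
      have habn1 : (a:ℝ)+b+1-n ≤ (γ+ε)*n + 3 := by nlinarith
      have habn0 : (0:ℝ) ≤ (a:ℝ)+b+1-n := by linarith
      have hS : ((b:ℝ)-a)*((a:ℝ)+b+1-n) ≤ ((γ-ε)*n+1)*((γ+ε)*n+3) :=
        mul_le_mul hba1 habn1 habn0 (by nlinarith)
      rw [div_mul_eq_mul_div, div_le_iff₀ hn0]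
      nlinarith
    have hDle : (∑ i ∈ Finset.Icc a n, (n.choose i : ℝ)) ≤ ((n:ℝ)+1) * n.choose a := by
      calc (∑ i ∈ Finset.Icc a n, (n.choose i : ℝ))
          ≤ ∑ _i ∈ Finset.Icc a n, (n.choose a : ℝ) := by
            apply Finset.sum_le_sum
            intro i hi
            exact_mod_cast choose_anti_aux n a h2a i (Finset.mem_Icc.mp hi).1
        _ = ((Finset.Icc a n).card : ℝ) * n.choose a := by
            rw [Finset.sum_const, nsmul_eq_mul]
        _ ≤ ((n:ℝ)+1) * n.choose a := by
            apply mul_le_mul_of_nonneg_right _ hCa.le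
            rw [Nat.card_Icc]
            have : n + 1 - a ≤ n + 1 := by omega
            exact_mod_cast this
    have hNb : (n.choose b : ℝ) ≤ ∑ i ∈ Finset.Icc b n, (n.choose i : ℝ) := by
      have hmem : b ∈ Finset.Icc b n := Finset.mem_Icc.mpr ⟨le_refl b, hbn⟩
      exact Finset.single_le_sum (f := fun i => (n.choose i : ℝ))
        (fun i _ => by positivity) hmem
    have he2 : (2:ℝ) ≤ Real.exp 1 := by
      have h := Real.exp_one_gt_d9
      norm_num at h ⊢; linarith
    have hkey : (Real.exp (-25) / n * Real.exp (-(6 * (γ^2 - ε^2) * n))) * (((n:ℝ)+1) * n.choose a)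
        ≤ Real.exp (-(6/(n:ℝ)) * (((b:ℝ)-a)*((a:ℝ)+b+1-n))) * n.choose a := by
      have hfrac : ((n:ℝ)+1)/n ≤ 2 := by
        rw [div_le_iff₀ hn0]; linarith
      have hEE : (0:ℝ) ≤ Real.exp (-25) * Real.exp (-(6 * (γ^2 - ε^2) * n)) := by positivity
      calc (Real.exp (-25) / n * Real.exp (-(6 * (γ^2 - ε^2) * n))) * (((n:ℝ)+1) * n.choose a)
          = (((n:ℝ)+1)/n) * (Real.exp (-25) * Real.exp (-(6 * (γ^2 - ε^2) * n))) * n.choose a := by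
            field_simp
        _ ≤ 2 * (Real.exp (-25) * Real.exp (-(6 * (γ^2 - ε^2) * n))) * n.choose a := by
            apply mul_le_mul_of_nonneg_right _ hCa.le
            exact mul_le_mul_of_nonneg_right hfrac hEE
        _ ≤ Real.exp 1 * (Real.exp (-25) * Real.exp (-(6 * (γ^2 - ε^2) * n))) * n.choose a := by
            apply mul_le_mul_of_nonneg_right _ hCa.le
            exact mul_le_mul_of_nonneg_right he2 hEE
        _ = Real.exp (1 + -25 + -(6 * (γ^2 - ε^2) * n)) * n.choose a := by
            rw [Real.exp_add, Real.exp_add]; ring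
        _ ≤ Real.exp (-(6/(n:ℝ)) * (((b:ℝ)-a)*((a:ℝ)+b+1-n))) * n.choose a := by
            apply mul_le_mul_of_nonneg_right _ hCa.le
            apply Real.exp_le_exp.mpr
            nlinarith [hSb]
    rw [ge_iff_le, le_div_iff₀ hD0]
    calc (Real.exp (-25) / n * Real.exp (-(6 * (γ^2 - ε^2) * n))) * (∑ i ∈ Finset.Icc a n, (n.choose i : ℝ))
        ≤ (Real.exp (-25) / n * Real.exp (-(6 * (γ^2 - ε^2) * n))) * (((n:ℝ)+1) * n.choose a) := by
          apply mul_le_mul_of_nonneg_left hDle (by positivity)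
      _ ≤ Real.exp (-(6/(n:ℝ)) * (((b:ℝ)-a)*((a:ℝ)+b+1-n))) * n.choose a := hkey
      _ = Real.exp (∑ i ∈ Finset.Ico a b, (-(6/(n:ℝ)) * (2*(i:ℝ)+2-n))) * n.choose a := by
          rw [hsum]
      _ ≤ (n.choose b : ℝ) := hchain
      _ ≤ ∑ i ∈ Finset.Icc b n, (n.choose i : ℝ) := hNb
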